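/- (de Moivre–Laplace with uniform error O(1/√n)) Let q ∈ (0,1) and c > 0 be fixed real numbers. There exist constants C > 0 and N > 0 such that for all integers n > N and all integers k with 0 ≤ k ≤ n and |k − nq| ≤ c√n, |φ_q(k,n) · √(2πnq(1−q)) · e^{(k−nq)²/(2nq(1−q))} − 1| ≤ C/√n. -/

import Mathlib

open Finset Filter Nat Real


lemma lem_log_one_add (u : ℝ) (h : |u| ≤ 1/2) : |Real.log (1+u) - (u - u^2/2)| ≤ 2*|u|^3 := by
  have h1 : |(-u)| < 1 := by rw [abs_neg]; linarith [abs_nonneg u]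
  have H := Real.abs_log_sub_add_sum_range_le h1 2
  simp [Finset.sum_range_succ] at H
  have e1 : |log (1 + u) - (u - u^2/2)| = |-u + u ^ 2 / (1 + 1) + log (1 + u)| := by
    rw [show (-u + u ^ 2 / (1 + 1) + log (1 + u)) = log (1 + u) - (u - u^2/2) by ring]
  rw [e1]
  refine H.trans ?_
  rw [div_le_iff₀ (by linarith)]
  nlinarith [pow_nonneg (abs_nonneg u) 3]

lemma lem_abs_log_le (z : ℝ) (h : |z-1| ≤ 1/2) : |Real.log z| ≤ 2*|z-1| := by
  have hz : 1/2 ≤ z := by cases abs_le.mp h; linarith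
  rcases le_or_gt 1 z with h1 | h1
  · rw [abs_of_nonneg (Real.log_nonneg h1), abs_of_nonneg (by linarith)]
    have := Real.log_le_sub_one_of_pos (by linarith : (0:ℝ) < z)
    linarith
  · rw [abs_of_nonpos (Real.log_nonpos (by linarith) (by linarith)), abs_of_neg (by linarith)]
    have h2 : Real.log (1/z) ≤ 1/z - 1 := Real.log_le_sub_one_of_pos (by positivity)
    rw [Real.log_div one_ne_zero (by linarith), Real.log_one] at h2
    have : 1/z - 1 = (1-z)/z := by field_simp
    rw [this] at h2
    have : (1-z)/z ≤ 2*(1-z) := by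
      rw [div_le_iff₀ (by linarith)]; nlinarith
    linarith


lemma lem_sqrt_pi_le (m : ℕ) (hm : 1 ≤ m) : Real.sqrt π ≤ Stirling.stirlingSeq m := by
  have ht : Tendsto (fun j : ℕ => Stirling.stirlingSeq (j+1)) atTop (nhds (Real.sqrt π)) :=
    Stirling.tendsto_stirlingSeq_sqrt_pi.comp (tendsto_add_atTop_nat 1)
  refine le_of_tendsto ht ?_
  filter_upwards [eventually_ge_atTop m] with j hj
  obtain ⟨i, rfl⟩ := Nat.exists_eq_add_of_le hm
  have h2 := Stirling.stirlingSeq'_antitone (show i ≤ j by omega)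
  simp only [Function.comp] at h2
  calc Stirling.stirlingSeq (j+1) ≤ Stirling.stirlingSeq (i+1) := h2
    _ = Stirling.stirlingSeq (1+i) := by rw [Nat.add_comm]
    _ ≤ Stirling.stirlingSeq (1+i) := le_refl _

lemma lem_delta_nonneg (m : ℕ) (hm : 1 ≤ m) :
    Real.log (Real.sqrt π) ≤ Real.log (Stirling.stirlingSeq m) :=
  Real.log_le_log (Real.sqrt_pos.mpr Real.pi_pos) (lem_sqrt_pi_le m hm)

lemma lem_delta_le_aux (m : ℕ) (hm : 1 ≤ m) (j : ℕ) :
    Real.log (Stirling.stirlingSeq (m+1)) - Real.log (Stirling.stirlingSeq (m+1+j)) ≤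
      1/(4*m) - 1/(4*(m+j) : ℝ) := by
  induction j with
  | zero => simp
  | succ i ih =>
    have step := Stirling.log_stirlingSeq_sub_log_stirlingSeq_succ (m+i+1)
    have h1 : (0:ℝ) < m + i := by positivity
    have key : (1:ℝ)/(4*(↑(m+i)+1)^2) ≤ 1/(4*((m:ℝ)+i)) - 1/(4*((m:ℝ)+i+1)) := by
      push_cast
      rw [div_sub_div _ _ (by positivity) (by positivity), div_le_div_iff₀ (by positivity) (by positivity)]
      ring_nf
      nlinarith
    push_cast at step key ⊢
    rw [show (m:ℝ) + (i+1) = (m:ℝ) + i + 1 by ring, show m + 1 + (i+1) = (m + i) + 2 by omega]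
    rw [show m + 1 + i = (m+i) + 1 by omega] at ih
    linarith

lemma lem_delta_le (j : ℕ) (hj : 2 ≤ j) :
    Real.log (Stirling.stirlingSeq j) - Real.log (Real.sqrt π) ≤ 1/(2*j) := by
  obtain ⟨m, rfl⟩ : ∃ m, j = (m + 1) + 1 := ⟨j - 2, by omega⟩
  have ht : Tendsto (fun i : ℕ => Real.log (Stirling.stirlingSeq (m+1+1)) - Real.log (Stirling.stirlingSeq (m+1+1+i)))
      atTop (nhds (Real.log (Stirling.stirlingSeq (m+1+1)) - Real.log (Real.sqrt π))) := by
    refine Tendsto.const_sub _ ?_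
    have h0 : Real.sqrt π ≠ 0 := ne_of_gt (Real.sqrt_pos.mpr Real.pi_pos)
    have := ((Real.continuousAt_log h0).tendsto).comp
      (Stirling.tendsto_stirlingSeq_sqrt_pi.comp (tendsto_add_atTop_nat (m+1+1)))
    exact this.congr (fun i => by simp [Nat.add_comm])
  have hle : Real.log (Stirling.stirlingSeq (m+1+1)) - Real.log (Real.sqrt π) ≤ 1/(4*(m+1) : ℝ) := by
    refine le_of_tendsto ht ?_
    filter_upwards with i
    have h1 := lem_delta_le_aux (m+1) (by omega) i
    have hp : (0:ℝ) ≤ 1/(4*((↑(m+1):ℝ)+i)) := by positivity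
    push_cast at h1 hp ⊢
    linarith
  have h2 : (1:ℝ)/(4*(m+1)) ≤ 1/(2*((m:ℝ)+1+1)) := by
    rw [div_le_div_iff₀ (by positivity) (by positivity)]
    nlinarith [Nat.cast_nonneg (α := ℝ) m]
  push_cast at hle ⊢
  linarith


lemma lem_log_factorial (m : ℕ) (hm : 1 ≤ m) :
    Real.log (m ! : ℝ) = Real.log (Stirling.stirlingSeq m) + Real.log (2*m)/2 + m*Real.log m - m := by
  have hm0 : (0:ℝ) < m := by exact_mod_cast hm
  have hd : (0:ℝ) < Real.sqrt (2*m) * ((m:ℝ)/Real.exp 1)^m := by positivity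
  have hfac : (m ! : ℝ) = Stirling.stirlingSeq m * (Real.sqrt (2*m) * ((m:ℝ)/Real.exp 1)^m) := by
    rw [Stirling.stirlingSeq, div_mul_cancel₀]
    exact ne_of_gt hd
  have hs : 0 < Stirling.stirlingSeq m := by
    rw [Stirling.stirlingSeq]; positivity
  rw [hfac, Real.log_mul (ne_of_gt hs) (ne_of_gt hd),
    Real.log_mul (by positivity) (by positivity),
    Real.log_sqrt (by positivity), Real.log_pow,
    Real.log_div (ne_of_gt hm0) (ne_of_gt (Real.exp_pos 1)), Real.log_exp]
  ring

lemma lem_entropy (q t : ℝ) (hq0 : 0 < q) (hq1 : q < 1) (ht1 : |t| ≤ q/2) (ht2 : |t| ≤ (1-q)/2) :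
    |(q+t)*Real.log ((q+t)/q) + (1-q-t)*Real.log ((1-q-t)/(1-q)) - t^2/(2*q*(1-q))|
      ≤ (1/(2*q^2)+1/(2*(1-q)^2)+4/q^3+4/(1-q)^3) * |t|^3 := by
  set p := 1 - q with hp
  have hp0 : 0 < p := by simp [hp]; linarith
  have hu1 : |t/q| ≤ 1/2 := by
    rw [abs_div, abs_of_pos hq0, div_le_iff₀ hq0]; linarith
  have hu2 : |(-t)/p| ≤ 1/2 := by
    rw [abs_div, abs_neg, abs_of_pos hp0, div_le_iff₀ hp0]; linarith
  have r1 := lem_log_one_add (t/q) hu1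
  have r2 := lem_log_one_add ((-t)/p) hu2
  have e1 : (1:ℝ) + t/q = (q+t)/q := by field_simp
  have e2 : (1:ℝ) + (-t)/p = (p-t)/p := by field_simp; ring
  rw [e1] at r1; rw [e2] at r2
  set A := Real.log ((q+t)/q) with hA
  set B := Real.log ((p-t)/p) with hB
  set r1v := A - (t/q - (t/q)^2/2) with hr1v
  set r2v := B - ((-t)/p - ((-t)/p)^2/2) with hr2v
  have key : (q+t)*A + (1-q-t)*B - t^2/(2*q*(1-q))
      = (q+t)*r1v + (p-t)*r2v - t^3/(2*q^2) + t^3/(2*p^2) := by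
    have h1 : A = r1v + (t/q - (t/q)^2/2) := by rw [hr1v]; ring
    have h2 : B = r2v + ((-t)/p - ((-t)/p)^2/2) := by rw [hr2v]; ring
    rw [h1, h2, hp]
    have hq1' : (1:ℝ) - q ≠ 0 := (by linarith : (0:ℝ) < 1 - q).ne'
    field_simp
    ring
  rw [show (1-q-t) = p - t by rw [hp]] at key ⊢
  rw [show (2*q*(1-q)) = 2*q*p by rw [hp]] at key ⊢
  rw [key]
  obtain ⟨hl1, hr1⟩ := abs_le.mp ht1
  obtain ⟨hl2, hr2⟩ := abs_le.mp ht2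
  have hqt : |q+t| ≤ 2 := by
    rw [abs_le]; constructor <;> linarith
  have hpt : |p-t| ≤ 2 := by
    rw [abs_le]; constructor <;> linarith
  have b1 : |(q+t)*r1v| ≤ 2*(2*(|t|^3/q^3)) := by
    rw [abs_mul]
    have hr : |r1v| ≤ 2*|t/q|^3 := r1
    have e : |t/q|^3 = |t|^3/q^3 := by rw [abs_div, abs_of_pos hq0, div_pow]
    rw [e] at hr
    exact mul_le_mul hqt hr (abs_nonneg _) (by norm_num)
  have b2 : |(p-t)*r2v| ≤ 2*(2*(|t|^3/p^3)) := by
    rw [abs_mul]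
    have h : |r2v| ≤ 2*|(-t)/p|^3 := r2
    have e : |(-t)/p|^3 = |t|^3/p^3 := by rw [abs_div, abs_neg, abs_of_pos hp0, div_pow]
    rw [e] at h
    exact mul_le_mul hpt h (abs_nonneg _) (by norm_num)
  have b3 : |t^3/(2*q^2)| ≤ |t|^3/(2*q^2) := by
    rw [abs_div, abs_of_pos (by positivity : (0:ℝ) < 2*q^2), abs_pow]
  have b4 : |t^3/(2*p^2)| ≤ |t|^3/(2*p^2) := by
    rw [abs_div, abs_of_pos (by positivity : (0:ℝ) < 2*p^2), abs_pow]
  have tri : |(q+t)*r1v + (p-t)*r2v - t^3/(2*q^2) + t^3/(2*p^2)|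
      ≤ |(q+t)*r1v| + |(p-t)*r2v| + |t^3/(2*q^2)| + |t^3/(2*p^2)| := by
    calc _ ≤ |(q+t)*r1v + (p-t)*r2v - t^3/(2*q^2)| + |t^3/(2*p^2)| := abs_add_le _ _
      _ ≤ |(q+t)*r1v + (p-t)*r2v| + |t^3/(2*q^2)| + |t^3/(2*p^2)| := by
          linarith [abs_sub ((q+t)*r1v + (p-t)*r2v) (t^3/(2*q^2))]
      _ ≤ _ := by linarith [abs_add_le ((q+t)*r1v) ((p-t)*r2v)]
  refine tri.trans ?_
  have ht3 : (0:ℝ) ≤ |t|^3 := by positivity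
  rw [show (1/(2*q^2)+1/(2*p^2)+4/q^3+4/p^3) * |t|^3
      = |t|^3/(2*q^2) + |t|^3/(2*p^2) + 4*|t|^3/q^3 + 4*|t|^3/p^3 by ring]
  have eq1 : 2*(2*(|t|^3/q^3)) = 4*|t|^3/q^3 := by ring
  have eq2 : 2*(2*(|t|^3/p^3)) = 4*|t|^3/p^3 := by ring
  linarith [b1, b2, b3, b4]


noncomputable def phi (q : ℝ) (k n : ℕ) : ℝ :=
  (n.choose k : ℝ) * q ^ k * (1 - q) ^ (n - k)

lemma lem_key (q : ℝ) (hq0 : 0 < q) (hq1 : q < 1) (n k : ℕ) (hk1 : 1 ≤ k) (hkn : k < n) :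
    Real.log (phi q k n) + Real.log (Real.sqrt (2*π*n*q*(1-q))) + ((k:ℝ) - n*q)^2/(2*n*q*(1-q))
    = ((Real.log (Stirling.stirlingSeq n) - Real.log (Real.sqrt π))
      - (Real.log (Stirling.stirlingSeq k) - Real.log (Real.sqrt π))
      - (Real.log (Stirling.stirlingSeq (n-k)) - Real.log (Real.sqrt π)))
      + Real.log ((n:ℝ)^2*q*(1-q)/((k:ℝ)*((n:ℝ)-(k:ℝ))))/2
      - (n:ℝ)*(((q+((k:ℝ)/n - q))*Real.log ((q+((k:ℝ)/n - q))/q)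
                + (1-q-((k:ℝ)/n - q))*Real.log ((1-q-((k:ℝ)/n - q))/(1-q)))
         - ((k:ℝ)/n - q)^2/(2*q*(1-q))) := by
  have hp0 : (0:ℝ) < 1 - q := by linarith
  set p := 1 - q with hpdef
  have hn0 : 0 < n := lt_trans (Nat.lt_of_lt_of_le Nat.zero_lt_one hk1) hkn
  have hnn : (0:ℝ) < (n:ℝ) := by exact_mod_cast hn0
  have ha : (0:ℝ) < (k:ℝ) := by exact_mod_cast hk1
  have hbnat : 1 ≤ n - k := by omega
  have hcast : ((n-k:ℕ):ℝ) = (n:ℝ) - (k:ℝ) := by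
    rw [Nat.cast_sub hkn.le]
  have hb : (0:ℝ) < (n:ℝ) - (k:ℝ) := by
    have : (k:ℝ) < n := by exact_mod_cast hkn
    linarith
  -- expand log phi
  have hch : (0:ℝ) < (n.choose k : ℝ) := by
    exact_mod_cast Nat.choose_pos hkn.le
  have h1 : Real.log (phi q k n) = Real.log (n.choose k : ℝ) + (k:ℝ) * Real.log q
      + ((n:ℝ)-(k:ℝ)) * Real.log p := by
    unfold phi
    rw [Real.log_mul (by positivity) (by positivity), Real.log_mul (ne_of_gt hch) (by positivity),
      Real.log_pow, Real.log_pow, hpdef]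
    push_cast [hcast]
    ring
  have h2 : Real.log (n.choose k : ℝ) = Real.log (n ! : ℝ) - Real.log (k ! : ℝ)
      - Real.log ((n-k)! : ℝ) := by
    rw [Nat.cast_choose ℝ hkn.le, Real.log_div (by positivity) (by positivity),
      Real.log_mul (by positivity) (by positivity)]
    ring
  have hf1 := lem_log_factorial n (by omega)
  have hf2 := lem_log_factorial k hk1
  have hf3 := lem_log_factorial (n-k) hbnat
  rw [hcast] at hf3
  -- log sqrt
  have hs1 : Real.log (Real.sqrt (2*π*n*q*p)) = Real.log (2*π*n*q*p)/2 :=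
    Real.log_sqrt (by positivity)
  have hs2 : Real.log (Real.sqrt π) = Real.log π/2 := Real.log_sqrt Real.pi_pos.le
  -- atomize composite logs
  have hpi := Real.pi_pos
  have e1 : Real.log (2*π*(n:ℝ)*q*p) = Real.log 2 + Real.log π + Real.log n + Real.log q + Real.log p := by
    rw [Real.log_mul (by positivity) (by positivity), Real.log_mul (by positivity) (by positivity),
      Real.log_mul (by positivity) (by positivity), Real.log_mul (by positivity) (by positivity)]
  have e2 : Real.log (2*(n:ℝ)) = Real.log 2 + Real.log n :=
    Real.log_mul (by norm_num) (ne_of_gt hnn)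
  have e3 : Real.log (2*(k:ℝ)) = Real.log 2 + Real.log k :=
    Real.log_mul (by norm_num) (ne_of_gt ha)
  have e4 : Real.log (2*((n:ℝ)-(k:ℝ))) = Real.log 2 + Real.log ((n:ℝ)-(k:ℝ)) :=
    Real.log_mul (by norm_num) (ne_of_gt hb)
  have e5 : Real.log ((n:ℝ)^2*q*p/((k:ℝ)*((n:ℝ)-(k:ℝ))))
      = 2*Real.log n + Real.log q + Real.log p - Real.log k - Real.log ((n:ℝ)-(k:ℝ)) := by
    rw [Real.log_div (by positivity) (by positivity), Real.log_mul (by positivity) (by positivity),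
      Real.log_mul (by positivity) (by positivity), Real.log_mul (ne_of_gt ha) (ne_of_gt hb),
      Real.log_pow]
    push_cast
    ring
  have e6 : Real.log ((q+((k:ℝ)/n - q))/q) = Real.log k - Real.log n - Real.log q := by
    rw [show q+((k:ℝ)/n - q) = (k:ℝ)/n by ring, Real.log_div (by positivity) (ne_of_gt hq0),
      Real.log_div (ne_of_gt ha) (ne_of_gt hnn)]
  have e7 : Real.log ((1-q-((k:ℝ)/n - q))/p) = Real.log ((n:ℝ)-(k:ℝ)) - Real.log n - Real.log p := by
    rw [show 1-q-((k:ℝ)/n - q) = ((n:ℝ)-(k:ℝ))/n by field_simp; ring,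
      Real.log_div (by positivity) (ne_of_gt hp0),
      Real.log_div (ne_of_gt hb) (ne_of_gt hnn)]
  have eqt : q+((k:ℝ)/n - q) = (k:ℝ)/n := by ring
  have eqb : 1-q-((k:ℝ)/n - q) = ((n:ℝ)-(k:ℝ))/n := by field_simp; ring
  rw [h1, h2, hf1, hf2, hf3, hs1, hs2, e1, e2, e3, e4, e5, e6, e7, eqt, eqb]
  have hlf : Real.log ((2:ℝ)*((n-k:ℕ):ℝ)) = Real.log 2 + Real.log ((n:ℝ)-(k:ℝ)) := by
    rw [hcast]; exact e4
  field_simp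
  ring

set_option maxHeartbeats 1000000 in
theorem deMoivreLaplace_sqrt (q c : ℝ) (hq0 : 0 < q) (hq1 : q < 1) (hc : 0 < c) :
    ∃ C > (0 : ℝ), ∃ N : ℕ, ∀ n : ℕ, n > N → ∀ k : ℕ, k ≤ n →
      |(k : ℝ) - n * q| ≤ c * Real.sqrt n →
      |phi q k n * Real.sqrt (2 * Real.pi * n * q * (1 - q)) *
          Real.exp (((k : ℝ) - n * q) ^ 2 / (2 * n * q * (1 - q))) - 1|
        ≤ C / Real.sqrt n := by
  have hp0 : (0:ℝ) < 1 - q := by linarith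
  have hqple1 : q*(1-q) ≤ 1 := by nlinarith
  have hA : q*(1-q)/16 ≤ q/2 := by nlinarith
  have hB : q*(1-q)/16 ≤ (1-q)/2 := by nlinarith
  obtain ⟨K, hKdef⟩ : ∃ x : ℝ, x = 1/(2*q^2)+1/(2*(1-q)^2)+4/q^3+4/(1-q)^3 := ⟨_, rfl⟩
  have hKpos : 0 < K := by rw [hKdef]; positivity
  obtain ⟨C1, hC1def⟩ : ∃ x : ℝ, x = K*c^3 + 8*c/(q*(1-q)) + 3/(q*(1-q)) + 1 := ⟨_, rfl⟩
  have hC1pos : 0 < C1 := by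
    have h1 : 0 < K*c^3 := mul_pos hKpos (by positivity)
    have h2 : 0 < 8*c/(q*(1-q)) := by positivity
    have h3 : 0 < 3/(q*(1-q)) := by positivity
    rw [hC1def]; linarith
  obtain ⟨S, hSdef⟩ : ∃ x : ℝ, x = (16*c/(q*(1-q)))^2 + 4/q + 4/(1-q) + C1^2 + 4 := ⟨_, rfl⟩
  refine ⟨2*C1, by linarith, ⌈S⌉₊, ?_⟩
  intro n hn k hkn hx
  have hqp : (0:ℝ) < q*(1-q) := by positivity
  have hnS : S ≤ (n:ℝ) := by
    have h1 : (⌈S⌉₊:ℝ) < (n:ℝ) := by exact_mod_cast hn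
    linarith [Nat.le_ceil S]
  clear hn
  have hs1 : (0:ℝ) ≤ (16*c/(q*(1-q)))^2 := sq_nonneg _
  have hs2 : (0:ℝ) ≤ 4/q := by positivity
  have hs3 : (0:ℝ) ≤ 4/(1-q) := by positivity
  have hs4 : (0:ℝ) ≤ C1^2 := sq_nonneg _
  have hn4 : (4:ℝ) ≤ n := by rw [hSdef] at hnS; linarith
  have hnn : (0:ℝ) < n := by linarith
  have hsn : (0:ℝ) < Real.sqrt n := Real.sqrt_pos.mpr hnn
  have hnsq : Real.sqrt n * Real.sqrt n = (n:ℝ) := Real.mul_self_sqrt hnn.le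
  have hsnn : Real.sqrt n ≤ (n:ℝ) := by
    refine (Real.sqrt_le_left hnn.le).mpr ?_
    have h1 : (n:ℝ)*1 ≤ (n:ℝ)*(n:ℝ) := mul_le_mul_of_nonneg_left (by linarith) hnn.le
    nlinarith
  have h16 : 16*c/(q*(1-q)) ≤ Real.sqrt n := by
    have := Real.sqrt_le_sqrt (show (16*c/(q*(1-q)))^2 ≤ (n:ℝ) by rw [hSdef] at hnS; linarith)
    rwa [Real.sqrt_sq (by positivity)] at this
  have hC1n : C1 ≤ Real.sqrt n := by
    have := Real.sqrt_le_sqrt (show C1^2 ≤ (n:ℝ) by rw [hSdef] at hnS; linarith)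
    rwa [Real.sqrt_sq hC1pos.le] at this
  have hnq4 : (4:ℝ) ≤ q * n := by
    have h1 : 4/q ≤ (n:ℝ) := by rw [hSdef] at hnS; linarith
    rw [div_le_iff₀ hq0] at h1; linarith
  have hnp4 : (4:ℝ) ≤ (1-q) * n := by
    have h1 : 4/(1-q) ≤ (n:ℝ) := by rw [hSdef] at hnS; linarith
    rw [div_le_iff₀ hp0] at h1; linarith
  obtain ⟨t, htdef⟩ : ∃ x : ℝ, x = (k:ℝ)/n - q := ⟨_, rfl⟩
  have htx : t = ((k:ℝ) - n*q)/n := by rw [htdef]; field_simp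
  have ht : |t| ≤ c / Real.sqrt n := by
    rw [htx, abs_div, abs_of_pos hnn]
    rw [div_le_div_iff₀ hnn hsn]
    calc |(k:ℝ) - n*q| * Real.sqrt n ≤ (c * Real.sqrt n) * Real.sqrt n :=
          mul_le_mul_of_nonneg_right hx hsn.le
      _ = c * n := by rw [mul_assoc, hnsq]
  have hcs : c / Real.sqrt n ≤ q*(1-q)/16 := by
    rw [div_le_div_iff₀ hsn (by norm_num : (0:ℝ) < 16)]
    rw [div_le_iff₀ hqp] at h16
    linarith
  have htq : |t| ≤ q*(1-q)/16 := ht.trans hcs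
  have ht2 : |t| ≤ q/2 := htq.trans hA
  have ht3 : |t| ≤ (1-q)/2 := htq.trans hB
  obtain ⟨htl, htr⟩ := abs_le.mp htq
  have hkt : (k:ℝ) = n*(q+t) := by rw [htdef]; field_simp; ring
  have hbt : (n:ℝ) - k = n*((1-q)-t) := by rw [hkt]; ring
  have hqt_lb : q/2 ≤ q + t := by linarith
  have hpt_lb : (1-q)/2 ≤ (1-q) - t := by linarith
  have hk_lb : q*(n:ℝ)/2 ≤ k := by
    rw [hkt]
    have h1 := mul_le_mul_of_nonneg_left hqt_lb hnn.le
    linarith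
  have hb_lb : (1-q)*(n:ℝ)/2 ≤ (n:ℝ) - k := by
    rw [hbt]
    have h1 := mul_le_mul_of_nonneg_left hpt_lb hnn.le
    linarith
  have hk2 : 2 ≤ k := by
    have : (2:ℝ) ≤ (k:ℝ) := by linarith
    exact_mod_cast this
  have hb2r : (2:ℝ) ≤ (n:ℝ) - k := by linarith
  have hkltn : k < n := by
    by_contra h
    push_neg at h
    have : (n:ℝ) ≤ (k:ℝ) := by exact_mod_cast h
    linarith
  have hbk2 : 2 ≤ n - k := by
    have h1 : ((n-k:ℕ):ℝ) = (n:ℝ) - k := by rw [Nat.cast_sub hkltn.le]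
    have : (2:ℝ) ≤ ((n-k:ℕ):ℝ) := by rw [h1]; exact hb2r
    exact_mod_cast this
  have hcastb : ((n-k:ℕ):ℝ) = (n:ℝ) - k := by rw [Nat.cast_sub hkltn.le]
  have hka : (0:ℝ) < (k:ℝ) := by linarith
  have hba : (0:ℝ) < (n:ℝ) - k := by linarith
  have hphi : 0 < phi q k n := by
    unfold phi
    have : 0 < (n.choose k : ℝ) := by exact_mod_cast Nat.choose_pos hkltn.le
    positivity
  have hsqp : 0 < Real.sqrt (2*Real.pi*n*q*(1-q)) := by
    apply Real.sqrt_pos.mpr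
    have := Real.pi_pos
    positivity
  have hexp : phi q k n * Real.sqrt (2*Real.pi*n*q*(1-q)) *
      Real.exp (((k:ℝ) - n*q)^2/(2*n*q*(1-q)))
      = Real.exp (Real.log (phi q k n) + Real.log (Real.sqrt (2*Real.pi*n*q*(1-q)))
          + ((k:ℝ) - n*q)^2/(2*n*q*(1-q))) := by
    rw [Real.exp_add, Real.exp_add, Real.exp_log hphi, Real.exp_log hsqp]
  rw [hexp, lem_key q hq0 hq1 n k (by omega) hkltn, ← htdef]
  obtain ⟨D, hDdef⟩ : ∃ x : ℝ, x = (Real.log (Stirling.stirlingSeq n) - Real.log (Real.sqrt Real.pi))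
      - (Real.log (Stirling.stirlingSeq k) - Real.log (Real.sqrt Real.pi))
      - (Real.log (Stirling.stirlingSeq (n-k)) - Real.log (Real.sqrt Real.pi)) := ⟨_, rfl⟩
  obtain ⟨G, hGdef⟩ : ∃ x : ℝ, x = Real.log ((n:ℝ)^2*q*(1-q)/((k:ℝ)*((n:ℝ)-(k:ℝ))))/2 := ⟨_, rfl⟩
  obtain ⟨B, hBdef⟩ : ∃ x : ℝ, x = (n:ℝ)*(((q+t)*Real.log ((q+t)/q)
                + (1-q-t)*Real.log ((1-q-t)/(1-q)))
         - t^2/(2*q*(1-q))) := ⟨_, rfl⟩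
  rw [← hDdef, ← hGdef, ← hBdef]
  clear hexp hphi hsqp hx hkn
  -- bound D
  have hd_n := lem_delta_le n (by omega)
  have hd_k := lem_delta_le k hk2
  have hd_b := lem_delta_le (n-k) hbk2
  have hd_n0 := lem_delta_nonneg n (by omega)
  have hd_k0 := lem_delta_nonneg k (by omega)
  have hd_b0 := lem_delta_nonneg (n-k) (by omega)
  rw [hcastb] at hd_b
  obtain ⟨X, hXdef⟩ : ∃ x : ℝ, x = 1/(q*(1-q))/Real.sqrt n := ⟨_, rfl⟩
  have hXpos : 0 < X := by rw [hXdef]; positivity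
  have hm1 : q*(1-q)*Real.sqrt n ≤ 1*Real.sqrt n := mul_le_mul_of_nonneg_right hqple1 hsn.le
  have hm2 : q*Real.sqrt n ≤ q*(n:ℝ) := mul_le_mul_of_nonneg_left hsnn hq0.le
  have hm3 : q*(1-q)*Real.sqrt n ≤ q*Real.sqrt n*1 := by
    have := mul_le_mul_of_nonneg_left (show (1-q) ≤ 1 by linarith)
      (show (0:ℝ) ≤ q*Real.sqrt n by positivity)
    linarith [this]
  have hm4 : (1-q)*Real.sqrt n ≤ (1-q)*(n:ℝ) := mul_le_mul_of_nonneg_left hsnn hp0.le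
  have hm5 : q*(1-q)*Real.sqrt n ≤ (1-q)*Real.sqrt n*1 := by
    have := mul_le_mul_of_nonneg_left (show q ≤ 1 by linarith)
      (show (0:ℝ) ≤ (1-q)*Real.sqrt n by positivity)
    linarith [this]
  have b1 : (1:ℝ)/(2*(n:ℝ)) ≤ X := by
    rw [hXdef, div_div, div_le_div_iff₀ (by positivity) (by positivity)]
    linarith
  have b2 : (1:ℝ)/(2*(k:ℝ)) ≤ X := by
    rw [hXdef, div_div, div_le_div_iff₀ (by positivity) (by positivity)]
    linarith
  have b3 : (1:ℝ)/(2*((n:ℝ)-k)) ≤ X := by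
    rw [hXdef, div_div, div_le_div_iff₀ (by positivity) (by positivity)]
    linarith
  have hDb : |D| ≤ 3/(q*(1-q))/Real.sqrt n := by
    have hX3 : 3/(q*(1-q))/Real.sqrt n = 3*X := by rw [hXdef]; ring
    rw [hX3, hDdef, abs_le]
    constructor <;> linarith
  -- bound G
  have hw1 : (n:ℝ)^2*q*(1-q)/((k:ℝ)*((n:ℝ)-(k:ℝ))) - 1
      = (t*(t-1+2*q))/((q+t)*((1-q)-t)) := by
    rw [hbt, hkt]
    have h1 : q + t ≠ 0 := ne_of_gt (by linarith)
    have h2 : (1-q) - t ≠ 0 := ne_of_gt (by linarith)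
    field_simp
    ring
  have hnum : |t*(t-1+2*q)| ≤ 2*|t| := by
    rw [abs_mul, mul_comm]
    apply mul_le_mul_of_nonneg_right _ (abs_nonneg t)
    rw [abs_le]
    constructor <;> linarith
  have hden : q*(1-q)/4 ≤ (q+t)*((1-q)-t) := by
    have h1 := mul_le_mul hqt_lb hpt_lb (by linarith) (by linarith)
    linarith
  have hwabs : |(n:ℝ)^2*q*(1-q)/((k:ℝ)*((n:ℝ)-(k:ℝ))) - 1| ≤ 8*|t|/(q*(1-q)) := by
    rw [hw1, abs_div, abs_of_pos (mul_pos (by linarith) (by linarith) : (0:ℝ) < (q+t)*((1-q)-t))]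
    calc |t*(t-1+2*q)|/((q+t)*((1-q)-t)) ≤ (2*|t|)/(q*(1-q)/4) :=
          div_le_div₀ (by positivity) hnum (by positivity) hden
      _ = 8*|t|/(q*(1-q)) := by field_simp; ring
  have hwhalf : |(n:ℝ)^2*q*(1-q)/((k:ℝ)*((n:ℝ)-(k:ℝ))) - 1| ≤ 1/2 := by
    refine hwabs.trans ?_
    rw [div_le_div_iff₀ hqp (by norm_num : (0:ℝ) < 2)]
    linarith
  have hGb : |G| ≤ 8*c/(q*(1-q))/Real.sqrt n := by
    rw [hGdef, abs_div, abs_of_pos (by norm_num : (0:ℝ) < 2)]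
    have hlog := lem_abs_log_le _ hwhalf
    have step1 : |Real.log ((n:ℝ)^2*q*(1-q)/((k:ℝ)*((n:ℝ)-(k:ℝ))))|/2 ≤ |(n:ℝ)^2*q*(1-q)/((k:ℝ)*((n:ℝ)-(k:ℝ))) - 1| := by
      linarith
    refine step1.trans (hwabs.trans ?_)
    calc 8*|t|/(q*(1-q)) ≤ 8*(c/Real.sqrt n)/(q*(1-q)) :=
          (div_le_div_iff_of_pos_right hqp).mpr (by linarith)
      _ = 8*c/(q*(1-q))/Real.sqrt n := by field_simp
  -- bound B
  have hent := lem_entropy q t hq0 hq1 ht2 ht3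
  have hBb : |B| ≤ K*c^3/Real.sqrt n := by
    rw [hBdef, abs_mul, abs_of_pos hnn]
    have h1 : |(q+t)*Real.log ((q+t)/q) + (1-q-t)*Real.log ((1-q-t)/(1-q)) - t^2/(2*q*(1-q))| ≤ K*|t|^3 := by
      rw [hKdef]; exact hent
    have h2 : |t|^3 ≤ (c/Real.sqrt n)^3 := pow_le_pow_left₀ (abs_nonneg t) ht 3
    have h3 : ((q+t)*Real.log ((q+t)/q) + (1-q-t)*Real.log ((1-q-t)/(1-q))) - t^2/(2*q*(1-q))
        = (q+t)*Real.log ((q+t)/q) + (1-q-t)*Real.log ((1-q-t)/(1-q)) - t^2/(2*q*(1-q)) := by ring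
    rw [h3]
    calc (n:ℝ) * |(q+t)*Real.log ((q+t)/q) + (1-q-t)*Real.log ((1-q-t)/(1-q)) - t^2/(2*q*(1-q))|
        ≤ (n:ℝ) * (K*(c/Real.sqrt n)^3) := by
          apply mul_le_mul_of_nonneg_left _ hnn.le
          refine h1.trans ?_
          exact mul_le_mul_of_nonneg_left h2 hKpos.le
      _ = K*c^3/Real.sqrt n := by
          rw [div_pow]
          have h4 : Real.sqrt n ^ 3 = n * Real.sqrt n := by
            rw [pow_succ, Real.sq_sqrt hnn.le]
          rw [h4]
          field_simp
  -- combine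
  have hsum : |D + G - B| ≤ C1/Real.sqrt n := by
    have htri : |D + G - B| ≤ |D| + |G| + |B| := by
      calc |D + G - B| ≤ |D + G| + |B| := abs_sub _ _
        _ ≤ |D| + |G| + |B| := by linarith [abs_add_le D G]
    refine htri.trans ?_
    have he : 3/(q*(1-q))/Real.sqrt n + 8*c/(q*(1-q))/Real.sqrt n + K*c^3/Real.sqrt n
        = (3/(q*(1-q)) + 8*c/(q*(1-q)) + K*c^3)/Real.sqrt n := by ring
    have hle : (3/(q*(1-q)) + 8*c/(q*(1-q)) + K*c^3)/Real.sqrt n ≤ C1/Real.sqrt n :=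
      (div_le_div_iff_of_pos_right hsn).mpr (by rw [hC1def]; linarith)
    linarith [hDb, hGb, hBb]
  have hone : |D + G - B| ≤ 1 := hsum.trans ((div_le_one hsn).mpr hC1n)
  calc |Real.exp (D + G - B) - 1| ≤ 2*|D + G - B| := Real.abs_exp_sub_one_le hone
    _ ≤ 2*(C1/Real.sqrt n) := by linarith
    _ = 2*C1/Real.sqrt n := by ring
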